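/- Let Ω be a finite set, let ν be a probability distribution on Ω, let Ψ : Ω → C be a map into a set C, let Λ ⊆ Ω, let k ≥ 1 be an integer, and for each X ∈ Ω^k let A_X be a probability distribution on Ω. For X = (x⁽¹⁾,…,x⁽ᵏ⁾) ∈ Ω^k let S_X = Ψ⁻¹({Ψ(x⁽¹⁾),…,Ψ(x⁽ᵏ⁾)}) ∪ Λ. Suppose that E_{X∼ν^{⊗k}}[ A_X(S_X) ] ≥ 1 − η for some η ∈ [0,1]. Then E_{X∼ν^{⊗k}}[ d_TV(A_X, ν) ] ≥ 1 − η − ν(Λ) − k·max_{c∈C} ν(Ψ⁻¹({c})). -/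

import Mathlib

/-- Let `ν` be a probability distribution on a finite set `Ω`,
`Ψ : Ω → C`, `Λ ⊆ Ω`, `k ≥ 1`, and for each tuple `X ∈ Ω^k` let `A_X` be a
probability distribution on `Ω`. If on average over `X ∼ ν^{⊗k}` the mass that
`A_X` places on `S_X = Ψ⁻¹(Ψ(X)) ∪ Λ` is at least `1-η`, then
`E_{X∼ν^{⊗k}}[d_TV(A_X, ν)] ≥ 1 - η - ν(Λ) - k·max_{c∈C} ν(Ψ⁻¹({c}))`. -/
theorem stmt15 {Ω C : Type*} [Fintype Ω] [DecidableEq Ω]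
    [Fintype C] [Nonempty C] [DecidableEq C]
    (ν : Ω → ℝ) (hν0 : ∀ x, 0 ≤ ν x) (hν1 : ∑ x, ν x = 1)
    (Ψ : Ω → C) (Λ : Finset Ω) (k : ℕ) (hk : 1 ≤ k)
    (A : (Fin k → Ω) → Ω → ℝ)
    (hA0 : ∀ X y, 0 ≤ A X y) (hA1 : ∀ X, ∑ y, A X y = 1)
    (η : ℝ) (hη0 : 0 ≤ η) (hη1 : η ≤ 1)
    (hmass : 1 - η ≤ ∑ X : Fin k → Ω, (∏ i, ν (X i)) *
      ∑ y ∈ Finset.univ.filter (fun y => (∃ i, Ψ y = Ψ (X i)) ∨ y ∈ Λ), A X y) :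
    1 - η - (∑ y ∈ Λ, ν y) -
        (k : ℝ) * Finset.univ.sup' Finset.univ_nonempty
          (fun c => ∑ y ∈ Finset.univ.filter (fun y' => Ψ y' = c), ν y) ≤
      ∑ X : Fin k → Ω, (∏ i, ν (X i)) * ((1 / 2) * ∑ y, |A X y - ν y|) := by
  set M := Finset.univ.sup' Finset.univ_nonempty
      (fun c => ∑ y ∈ Finset.univ.filter (fun y' => Ψ y' = c), ν y) with hMdef
  have hM : ∀ c : C, ∑ y ∈ Finset.univ.filter (fun y' => Ψ y' = c), ν y ≤ M :=
    fun c => by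
      rw [hMdef]
      exact Finset.le_sup' (fun c : C => ∑ y ∈ Finset.univ.filter (fun y' => Ψ y' = c), ν y)
        (Finset.mem_univ c)
  have hw : (∑ X : Fin k → Ω, ∏ i, ν (X i)) = 1 := by
    rw [← Fintype.piFinset_univ, ← Finset.prod_univ_sum]
    simp [hν1]
  have hw0 : ∀ X : Fin k → Ω, 0 ≤ ∏ i, ν (X i) :=
    fun X => Finset.prod_nonneg fun i _ => hν0 _
  have key : ∀ X : Fin k → Ω,
      (∑ y ∈ Finset.univ.filter (fun y => (∃ i, Ψ y = Ψ (X i)) ∨ y ∈ Λ), A X y)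
        - (∑ y ∈ Λ, ν y) - (k : ℝ) * M ≤ (1 / 2) * ∑ y, |A X y - ν y| := by
    intro X
    set S := Finset.univ.filter (fun y => (∃ i, Ψ y = Ψ (X i)) ∨ y ∈ Λ) with hS
    have hνS : ∑ y ∈ S, ν y ≤ (∑ y ∈ Λ, ν y) + (k : ℝ) * M := by
      have h1 : ∑ y ∈ S, ν y ≤ ∑ y ∈ S,
          ((if y ∈ Λ then ν y else 0) + ∑ i : Fin k, if Ψ y = Ψ (X i) then ν y else 0) := by
        apply Finset.sum_le_sum
        intro y hy
        have hΛ0 : (0:ℝ) ≤ if y ∈ Λ then ν y else 0 := by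
          split_ifs <;> simp [hν0 y]
        have hI0 : (0:ℝ) ≤ ∑ i : Fin k, if Ψ y = Ψ (X i) then ν y else 0 :=
          Finset.sum_nonneg fun i _ => by split_ifs <;> simp [hν0 y]
        rcases (Finset.mem_filter.mp hy).2 with ⟨i, hi⟩ | hΛ
        · have h2 : ν y ≤ ∑ i : Fin k, if Ψ y = Ψ (X i) then ν y else 0 := by
            have := Finset.single_le_sum
              (f := fun i : Fin k => if Ψ y = Ψ (X i) then ν y else 0)
              (fun j _ => by split_ifs <;> simp [hν0 y]) (Finset.mem_univ i)
            simpa [hi] using this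
          linarith
        · have h2 : ν y ≤ if y ∈ Λ then ν y else 0 := by simp [hΛ]
          linarith
      have h2 : ∑ y ∈ S,
          ((if y ∈ Λ then ν y else 0) + ∑ i : Fin k, if Ψ y = Ψ (X i) then ν y else 0)
          ≤ ∑ y : Ω,
          ((if y ∈ Λ then ν y else 0) + ∑ i : Fin k, if Ψ y = Ψ (X i) then ν y else 0) := by
        apply Finset.sum_le_sum_of_subset_of_nonneg (Finset.subset_univ S)
        intro y _ _
        have hΛ0 : (0:ℝ) ≤ if y ∈ Λ then ν y else 0 := by
          split_ifs <;> simp [hν0 y]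
        have hI0 : (0:ℝ) ≤ ∑ i : Fin k, if Ψ y = Ψ (X i) then ν y else 0 :=
          Finset.sum_nonneg fun i _ => by split_ifs <;> simp [hν0 y]
        linarith
      have h3 : ∑ y : Ω,
          ((if y ∈ Λ then ν y else 0) + ∑ i : Fin k, if Ψ y = Ψ (X i) then ν y else 0)
          = (∑ y ∈ Λ, ν y) +
            ∑ i : Fin k, ∑ y ∈ Finset.univ.filter (fun y' => Ψ y' = Ψ (X i)), ν y := by
        rw [Finset.sum_add_distrib]
        congr 1
        · simp [Finset.sum_ite_mem]
        · rw [Finset.sum_comm]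
          congr 1
          ext i
          rw [Finset.sum_filter]
      have h4 : ∑ i : Fin k, ∑ y ∈ Finset.univ.filter (fun y' => Ψ y' = Ψ (X i)), ν y
          ≤ (k : ℝ) * M := by
        calc ∑ i : Fin k, ∑ y ∈ Finset.univ.filter (fun y' => Ψ y' = Ψ (X i)), ν y
            ≤ ∑ _i : Fin k, M := Finset.sum_le_sum fun i _ => hM (Ψ (X i))
          _ = (k : ℝ) * M := by simp [mul_comm]
      linarith
    have hsum0 : ∑ y, (A X y - ν y) = 0 := by
      rw [Finset.sum_sub_distrib, hA1 X, hν1]; ring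
    have hsplit : ∑ y ∈ S, (A X y - ν y) + ∑ y ∈ Sᶜ, (A X y - ν y) = 0 := by
      rw [Finset.sum_add_sum_compl]; exact hsum0
    have e1 : ∑ y ∈ S, (A X y - ν y) ≤ ∑ y ∈ S, |A X y - ν y| :=
      Finset.sum_le_sum fun y _ => le_abs_self _
    have e2 : -∑ y ∈ Sᶜ, (A X y - ν y) ≤ ∑ y ∈ Sᶜ, |A X y - ν y| := by
      rw [← Finset.sum_neg_distrib]
      exact Finset.sum_le_sum fun y _ => neg_le_abs _
    have e3 : ∑ y ∈ S, |A X y - ν y| + ∑ y ∈ Sᶜ, |A X y - ν y| = ∑ y, |A X y - ν y| :=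
      Finset.sum_add_sum_compl S _
    have e4 : ∑ y ∈ S, (A X y - ν y) = ∑ y ∈ S, A X y - ∑ y ∈ S, ν y :=
      Finset.sum_sub_distrib _ _
    linarith
  have step : ∀ X : Fin k → Ω,
      (∏ i, ν (X i)) * ((∑ y ∈ Finset.univ.filter
          (fun y => (∃ i, Ψ y = Ψ (X i)) ∨ y ∈ Λ), A X y)
        - (∑ y ∈ Λ, ν y) - (k : ℝ) * M)
      ≤ (∏ i, ν (X i)) * ((1 / 2) * ∑ y, |A X y - ν y|) :=
    fun X => mul_le_mul_of_nonneg_left (key X) (hw0 X)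
  have hsum : ∑ X : Fin k → Ω, (∏ i, ν (X i)) * ((∑ y ∈ Finset.univ.filter
          (fun y => (∃ i, Ψ y = Ψ (X i)) ∨ y ∈ Λ), A X y)
        - (∑ y ∈ Λ, ν y) - (k : ℝ) * M)
      = (∑ X : Fin k → Ω, (∏ i, ν (X i)) * ∑ y ∈ Finset.univ.filter
          (fun y => (∃ i, Ψ y = Ψ (X i)) ∨ y ∈ Λ), A X y)
        - ((∑ y ∈ Λ, ν y) + (k : ℝ) * M) := by
    simp only [mul_sub, Finset.sum_sub_distrib, ← Finset.sum_mul, hw]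
    ring
  have final : ∑ X : Fin k → Ω, (∏ i, ν (X i)) * ((∑ y ∈ Finset.univ.filter
          (fun y => (∃ i, Ψ y = Ψ (X i)) ∨ y ∈ Λ), A X y)
        - (∑ y ∈ Λ, ν y) - (k : ℝ) * M)
      ≤ ∑ X : Fin k → Ω, (∏ i, ν (X i)) * ((1 / 2) * ∑ y, |A X y - ν y|) :=
    Finset.sum_le_sum fun X _ => step X
  rw [hsum] at final
  linarith
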